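/- Let n ≥ 1, let m(x,y) = x^p y^q ∈ 𝒪_n be an ordered monomial with signed index permutation σ ∈ B_n. Define γ_i = f_{|σ^{-1}(i)|}(σ) and μ_i = (q_i − γ_i)/2 for 1 ≤ i ≤ n. Then γ = (γ_1,…,γ_n) and μ = (μ_1,…,μ_n) are sequences of non-negative integers satisfying: (1) q = 2μ + γ; (2) μ_{|σ(1)|} ≥ μ_{|σ(2)|} ≥ ⋯ ≥ μ_{|σ(n)|}; (3) γ_{|σ(1)|} ≥ γ_{|σ(2)|} ≥ ⋯ ≥ γ_{|σ(n)|}; and (4) if 1 ≤ i < j ≤ n and γ_i = γ_j, then 𝔰(q_i) ≥ 𝔰(q_j). -/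

import Mathlib

open MvPolynomial

/-- The hyperoctahedral group `Bₙ`, realized as the subgroup of permutations of `ℤ`
that commute with negation and fix every integer of absolute value greater than `n`.
Such a permutation restricts to a bijection `σ` of `{-n,…,-1,1,…,n}` with
`σ(-k) = -σ(k)`, and every such bijection arises from a unique element. -/
def HOct (n : ℕ) : Subgroup (Equiv.Perm ℤ) where
  carrier := {σ | (∀ k : ℤ, σ (-k) = -(σ k)) ∧ ∀ k : ℤ, (n : ℤ) < |k| → σ k = k}
  one_mem' := by
    refine ⟨fun k => rfl, fun k _ => rfl⟩
  mul_mem' := by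
    rintro σ τ ⟨hσ1, hσ2⟩ ⟨hτ1, hτ2⟩
    refine ⟨fun k => ?_, fun k hk => ?_⟩
    · simp [Equiv.Perm.mul_apply, hτ1, hσ1]
    · simp [Equiv.Perm.mul_apply, hτ2 k hk, hσ2 k hk]
  inv_mem' := by
    rintro σ ⟨h1, h2⟩
    refine ⟨fun k => ?_, fun k hk => ?_⟩
    · apply σ.injective
      simp [h1]
    · have h := h2 k hk
      nth_rewrite 1 [← h]
      simp

/-- The descent set `Des(σ) = {1 ≤ i ≤ n-1 : σ(i) > σ(i+1)}`. -/
def DesB (n : ℕ) (σ : Equiv.Perm ℤ) : Finset ℕ :=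
  (Finset.Ico 1 n).filter fun i => σ ((i : ℤ) + 1) < σ (i : ℤ)

/-- `d_i(σ) = #{j ∈ Des(σ) : j ≥ i}`. -/
def dB (n : ℕ) (σ : Equiv.Perm ℤ) (i : ℕ) : ℕ :=
  ((DesB n σ).filter fun j => i ≤ j).card

/-- `ε_i(σ)`: `1` if `σ(i) < 0`, `0` otherwise. -/
def epsB (σ : Equiv.Perm ℤ) (i : ℕ) : ℕ := if σ (i : ℤ) < 0 then 1 else 0

/-- `f_i(σ) = 2 d_i(σ) + ε_i(σ)`. -/
def fB (n : ℕ) (σ : Equiv.Perm ℤ) (i : ℕ) : ℕ := 2 * dB n σ i + epsB σ i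

/-- The sign `σ(k)/|σ(k)|` as a rational number. -/
def sgnQ (σ : Equiv.Perm ℤ) (k : ℤ) : ℚ := if σ k < 0 then -1 else 1

/-- For `i : Fin n` (representing the index `i+1 ∈ {1,…,n}`), the element of `Fin n`
representing `|σ(i+1)| ∈ {1,…,n}`. -/
def sIdx {n : ℕ} (σ : Equiv.Perm ℤ) (i : Fin n) : Fin n :=
  ⟨((σ ((i : ℕ) + 1 : ℤ)).natAbs - 1) % n, Nat.mod_lt _ i.pos⟩

/-- The diagonal action of a signed permutation on `ℚ[x₁,…,xₙ,y₁,…,yₙ]`: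
`x_k ↦ (σ(k)/|σ(k)|)·x_{|σ(k)|}` and `y_k ↦ (σ(k)/|σ(k)|)·y_{|σ(k)|}`.
Here `Sum.inl i` is the variable `x_{i+1}` and `Sum.inr i` is `y_{i+1}`. -/
noncomputable def actXY (n : ℕ) (σ : Equiv.Perm ℤ) :
    MvPolynomial (Fin n ⊕ Fin n) ℚ →ₐ[ℚ] MvPolynomial (Fin n ⊕ Fin n) ℚ :=
  aeval (Sum.elim
    (fun i => C (sgnQ σ ((i : ℕ) + 1 : ℤ)) * X (Sum.inl (sIdx σ i)))
    (fun i => C (sgnQ σ ((i : ℕ) + 1 : ℤ)) * X (Sum.inr (sIdx σ i))))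

/-- Action of a signed permutation on the `x`-variables only. -/
noncomputable def actX (n : ℕ) (σ : Equiv.Perm ℤ) :
    MvPolynomial (Fin n ⊕ Fin n) ℚ →ₐ[ℚ] MvPolynomial (Fin n ⊕ Fin n) ℚ :=
  aeval (Sum.elim
    (fun i => C (sgnQ σ ((i : ℕ) + 1 : ℤ)) * X (Sum.inl (sIdx σ i)))
    (fun i => X (Sum.inr i)))

/-- Action of a signed permutation on the `y`-variables only. -/
noncomputable def actY (n : ℕ) (σ : Equiv.Perm ℤ) :
    MvPolynomial (Fin n ⊕ Fin n) ℚ →ₐ[ℚ] MvPolynomial (Fin n ⊕ Fin n) ℚ :=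
  aeval (Sum.elim
    (fun i => X (Sum.inl i))
    (fun i => C (sgnQ σ ((i : ℕ) + 1 : ℤ)) * X (Sum.inr (sIdx σ i))))

/-- The averaging operator `ρ(f) = (1/|Bₙ|) ∑_{σ ∈ Bₙ} σ·f`. -/
noncomputable def rho (n : ℕ) (f : MvPolynomial (Fin n ⊕ Fin n) ℚ) :
    MvPolynomial (Fin n ⊕ Fin n) ℚ :=
  (Nat.card ↥(HOct n) : ℚ)⁻¹ • ∑ᶠ σ : ↥(HOct n), actXY n (σ : Equiv.Perm ℤ) f

/-- The diagonal signed descent monomial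
`c_σ = ∏_{i=1}^n x_i^{f_i(σ⁻¹)} y_i^{f_{|σ⁻¹(i)|}(σ)}`. -/
noncomputable def cMon (n : ℕ) (σ : Equiv.Perm ℤ) : MvPolynomial (Fin n ⊕ Fin n) ℚ :=
  ∏ i : Fin n,
    (X (Sum.inl i) ^ fB n σ⁻¹ ((i : ℕ) + 1) *
      X (Sum.inr i) ^ fB n σ ((σ⁻¹ ((i : ℕ) + 1 : ℤ)).natAbs))

/-- The monomial `x^p y^q`. -/
noncomputable def monXY (n : ℕ) (p q : Fin n → ℕ) : MvPolynomial (Fin n ⊕ Fin n) ℚ :=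
  (∏ i : Fin n, X (Sum.inl i) ^ p i) * ∏ i : Fin n, X (Sum.inr i) ^ q i

/-- The monomial `x^p y^q` is ordered (belongs to `𝒪ₙ`). -/
def OrderedMon (n : ℕ) (p q : Fin n → ℕ) : Prop :=
  (∀ k, Even (p k + q k)) ∧ Antitone p ∧
  (∀ (i : Fin n) (h : (i : ℕ) + 1 < n),
    p i = p ⟨(i : ℕ) + 1, h⟩ → Even (p i) → q ⟨(i : ℕ) + 1, h⟩ ≤ q i) ∧
  (∀ (i : Fin n) (h : (i : ℕ) + 1 < n),
    p i = p ⟨(i : ℕ) + 1, h⟩ → Odd (p i) → q i ≤ q ⟨(i : ℕ) + 1, h⟩)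

/-- `σ` is the signed index permutation of a monomial with `y`-exponent sequence `q`:
(1) `q_{|σ(1)|} ≥ ⋯ ≥ q_{|σ(n)|}`; (2) ties `q_{|σ(i)|} = q_{|σ(j)|}` (`i < j`) force
`σ(i) < σ(i+1) < ⋯ < σ(j)`; (3) `q_{|σ(i)|}` is even iff `σ(i) > 0`. -/
def IsSignedIndexPerm (n : ℕ) (q : Fin n → ℕ) (σ : Equiv.Perm ℤ) : Prop :=
  σ ∈ HOct n ∧
  Antitone (fun i : Fin n => q (sIdx σ i)) ∧
  (∀ i j : Fin n, i < j → q (sIdx σ i) = q (sIdx σ j) →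
    ∀ k l : Fin n, i ≤ k → k < l → l ≤ j →
      σ ((k : ℕ) + 1 : ℤ) < σ ((l : ℕ) + 1 : ℤ)) ∧
  (∀ i : Fin n, Even (q (sIdx σ i)) ↔ 0 < σ ((i : ℕ) + 1 : ℤ))

/-- `𝔰(q) = q` if `q` is even, `-q` if `q` is odd. -/
def sFun (q : ℕ) : ℤ := if Even q then (q : ℤ) else -(q : ℤ)

/-- The decreasing rearrangement `𝔬(q)` of a sequence `q`. -/
def oArr {n : ℕ} (q : Fin n → ℕ) : Fin n → ℕ := fun i => q (Tuple.sort q i.rev)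

/-- Strict lexicographic comparison of sequences. -/
def LexLT {n : ℕ} {α : Type*} [LT α] (a b : Fin n → α) : Prop :=
  ∃ i, (∀ j, j < i → a j = b j) ∧ a i < b i

/-- The monomial `x^{p'} y^{q'}` strictly precedes `x^p y^q` in the total order `≼` on
ordered monomials: either `𝔬(x^{p'}y^{q'}) <_ℓ 𝔬(x^p y^q)` lexicographically, or the
`𝔬`-data agree and `(p', 𝔰(q')) <_ℓ (p, 𝔰(q))` lexicographically. -/
def MonPrec {n : ℕ} (p' q' p q : Fin n → ℕ) : Prop :=
  LexLT (oArr p') (oArr p) ∨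
  (oArr p' = oArr p ∧ LexLT (oArr q') (oArr q)) ∨
  (oArr p' = oArr p ∧ oArr q' = oArr q ∧
    (LexLT p' p ∨ (p' = p ∧ LexLT (fun i => sFun (q' i)) (fun i => sFun (q i)))))

/-- The monomial symmetric polynomial `m_{2ν}(x) = ∑_{[α] ∈ Σₙ/Σₙ(ν)} x^{2α(ν)}`,
i.e. the sum of all distinct monomials `x^{2w}` with `w` a rearrangement of `ν`. -/
noncomputable def mSymX (n : ℕ) (ν : Fin n → ℕ) : MvPolynomial (Fin n ⊕ Fin n) ℚ :=
  ∑ w ∈ Finset.image (fun α : Equiv.Perm (Fin n) => ν ∘ α) Finset.univ,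
    ∏ i : Fin n, X (Sum.inl i) ^ (2 * w i)

/-- The monomial symmetric polynomial `m_{2μ}(y)`. -/
noncomputable def mSymY (n : ℕ) (μ : Fin n → ℕ) : MvPolynomial (Fin n ⊕ Fin n) ℚ :=
  ∑ w ∈ Finset.image (fun α : Equiv.Perm (Fin n) => μ ∘ α) Finset.univ,
    ∏ i : Fin n, X (Sum.inr i) ^ (2 * w i)

/-- The action of a signed permutation on `ℚ[x₁,…,xₙ]`:
`x_k ↦ (σ(k)/|σ(k)|)·x_{|σ(k)|}`. Here the variable `i : Fin n` is `x_{i+1}`. -/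
noncomputable def actB (n : ℕ) (σ : Equiv.Perm ℤ) :
    MvPolynomial (Fin n) ℚ →ₐ[ℚ] MvPolynomial (Fin n) ℚ :=
  aeval fun i => C (sgnQ σ ((i : ℕ) + 1 : ℤ)) * X (sIdx σ i)

/-- The signed descent monomial `b_σ = ∏_{i=1}^n x_i^{f_{|σ⁻¹(i)|}(σ)}`. -/
noncomputable def bMon (n : ℕ) (σ : Equiv.Perm ℤ) : MvPolynomial (Fin n) ℚ :=
  ∏ i : Fin n, X i ^ fB n σ ((σ⁻¹ ((i : ℕ) + 1 : ℤ)).natAbs)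

section QDecompAux

variable {n : ℕ} {σ : Equiv.Perm ℤ}

lemma perm_inv_apply_self' (τ : Equiv.Perm ℤ) (k : ℤ) : τ⁻¹ (τ k) = k := by simp

lemma hoct_zero (h : σ ∈ HOct n) : σ 0 = 0 := by
  have := h.1 0
  simp at this
  omega

lemma hoct_ne_zero (h : σ ∈ HOct n) {k : ℤ} (hk : k ≠ 0) : σ k ≠ 0 := by
  intro hc
  exact hk (σ.injective (by rw [hc, hoct_zero h]))

lemma hoct_abs_le (h : σ ∈ HOct n) {k : ℤ} (hk : |k| ≤ (n : ℤ)) : |σ k| ≤ (n : ℤ) := by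
  by_contra hc
  push_neg at hc
  have h2 := ((HOct n).inv_mem h).2 (σ k) hc
  rw [perm_inv_apply_self'] at h2
  rw [← h2] at hc
  exact absurd hc (not_lt.2 hk)

lemma hoct_bounds (h : σ ∈ HOct n) (i : Fin n) :
    1 ≤ (σ ((i : ℕ) + 1 : ℤ)).natAbs ∧ (σ ((i : ℕ) + 1 : ℤ)).natAbs ≤ n := by
  have hne : σ ((i : ℕ) + 1 : ℤ) ≠ 0 := hoct_ne_zero h (by positivity)
  have hle : |σ ((i : ℕ) + 1 : ℤ)| ≤ (n : ℤ) := by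
    apply hoct_abs_le h
    have := i.isLt
    rw [abs_of_nonneg (by positivity)]
    omega
  constructor
  · omega
  · have := Int.abs_eq_natAbs (σ ((i : ℕ) + 1 : ℤ))
    omega

lemma sIdx_val (h : σ ∈ HOct n) (i : Fin n) :
    ((sIdx σ i : ℕ)) = (σ ((i : ℕ) + 1 : ℤ)).natAbs - 1 := by
  obtain ⟨h1, h2⟩ := hoct_bounds h i
  have := i.pos
  unfold sIdx
  simp only
  exact Nat.mod_eq_of_lt (by omega)

lemma sIdx_val_add_one (h : σ ∈ HOct n) (i : Fin n) :
    (sIdx σ i : ℕ) + 1 = (σ ((i : ℕ) + 1 : ℤ)).natAbs := by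
  obtain ⟨h1, h2⟩ := hoct_bounds h i
  rw [sIdx_val h]
  omega

lemma inv_natAbs (h : σ ∈ HOct n) (i : Fin n) :
    (σ⁻¹ (((sIdx σ i : ℕ) : ℤ) + 1)).natAbs = (i : ℕ) + 1 := by
  have hv : ((sIdx σ i : ℕ) : ℤ) + 1 = ((σ ((i : ℕ) + 1 : ℤ)).natAbs : ℤ) := by
    rw [← sIdx_val_add_one h i]; push_cast; ring
  rw [hv]
  rcases Int.natAbs_eq (σ ((i : ℕ) + 1 : ℤ)) with he | he
  · rw [← he, perm_inv_apply_self']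
    omega
  · have h3 : ((σ ((i : ℕ) + 1 : ℤ)).natAbs : ℤ) = -(σ ((i : ℕ) + 1 : ℤ)) := by omega
    rw [h3, ((HOct n).inv_mem h).1, perm_inv_apply_self']
    omega

lemma sIdx_inv_sIdx (h : σ ∈ HOct n) (i : Fin n) : sIdx σ⁻¹ (sIdx σ i) = i := by
  apply Fin.ext
  rw [sIdx_val ((HOct n).inv_mem h), inv_natAbs h]
  omega

lemma sIdx_sIdx_inv (h : σ ∈ HOct n) (i : Fin n) : sIdx σ (sIdx σ⁻¹ i) = i := by
  have := sIdx_inv_sIdx ((HOct n).inv_mem h) i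
  rwa [inv_inv] at this

lemma mem_DesB {i : ℕ} : i ∈ DesB n σ ↔ (1 ≤ i ∧ i < n) ∧ σ ((i : ℤ) + 1) < σ (i : ℤ) := by
  simp only [DesB, Finset.mem_filter, Finset.mem_Ico]

lemma dB_top : dB n σ n = 0 := by
  rw [dB, Finset.card_eq_zero, Finset.filter_eq_empty_iff]
  intro j hj
  rw [mem_DesB] at hj
  omega

lemma dB_antitone {i j : ℕ} (hij : i ≤ j) : dB n σ j ≤ dB n σ i := by
  apply Finset.card_le_card
  apply Finset.monotone_filter_right
  intro x hx
  omega

lemma dB_step {i : ℕ} (h1 : 1 ≤ i) (h2 : i < n) :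
    dB n σ i = dB n σ (i + 1) + (if σ ((i : ℤ) + 1) < σ (i : ℤ) then 1 else 0) := by
  unfold dB
  have hsplit : ((DesB n σ).filter fun j => i ≤ j)
      = ((DesB n σ).filter fun j => i + 1 ≤ j) ∪ ((DesB n σ).filter fun j => j = i) := by
    ext j
    simp only [Finset.mem_filter, Finset.mem_union]
    constructor
    · rintro ⟨hj, hij⟩
      rcases Nat.lt_or_ge j (i+1) with hc | hc
      · exact Or.inr ⟨hj, by omega⟩
      · exact Or.inl ⟨hj, hc⟩
    · rintro (⟨hj, hij⟩ | ⟨hj, hij⟩) <;> exact ⟨by assumption, by omega⟩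
  rw [hsplit, Finset.card_union_of_disjoint]
  · congr 1
    rw [Finset.filter_eq']
    by_cases hd : σ ((i : ℤ) + 1) < σ (i : ℤ)
    · rw [if_pos hd, if_pos (mem_DesB.2 ⟨⟨h1, h2⟩, hd⟩), Finset.card_singleton]
    · rw [if_neg hd, if_neg (fun hc => hd (mem_DesB.1 hc).2), Finset.card_empty]
  · rw [Finset.disjoint_filter]
    intro x hx h1x
    omega

lemma ascent_of_dB_eq (h : σ ∈ HOct n) {i : ℕ} (h1 : 1 ≤ i) (h2 : i < n)
    (hd : dB n σ i = dB n σ (i + 1)) : σ (i : ℤ) < σ ((i : ℤ) + 1) := by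
  have hs := dB_step (σ := σ) h1 h2
  by_cases hc : σ ((i : ℤ) + 1) < σ (i : ℤ)
  · rw [if_pos hc] at hs; omega
  · rw [if_neg hc] at hs
    push_neg at hc
    rcases lt_or_eq_of_le hc with h | h
    · exact h
    · exfalso
      have := σ.injective h
      omega

lemma chain_of_dB_eq (h : σ ∈ HOct n) :
    ∀ (m s : ℕ), 1 ≤ s → s + m + 1 ≤ n → dB n σ s = dB n σ (s + m + 1) →
      σ (s : ℤ) < σ ((s + m + 1 : ℕ) : ℤ) := by
  intro m
  induction m with
  | zero =>
    intro s hs1 hs2 hd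
    exact ascent_of_dB_eq h hs1 (by omega) hd
  | succ m ih =>
    intro s hs1 hs2 hd
    have ha1 : dB n σ (s + m + 1) ≤ dB n σ s := dB_antitone (by omega)
    have ha2 : dB n σ (s + m + 2) ≤ dB n σ (s + m + 1) := dB_antitone (by omega)
    have hd2 : dB n σ s = dB n σ (s + m + 2) := by
      have : s + (m + 1) + 1 = s + m + 2 := by omega
      rwa [this] at hd
    have he1 : dB n σ s = dB n σ (s + m + 1) := by omega
    have he2 : dB n σ (s + m + 1) = dB n σ (s + m + 2) := by omega
    have hstep := ascent_of_dB_eq h (i := s + m + 1) (by omega) (by omega) he2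
    have hih := ih s hs1 (by omega) he1
    have hcast : ((s + (m + 1) + 1 : ℕ) : ℤ) = ((s + m + 1 : ℕ) : ℤ) + 1 := by push_cast; ring
    rw [hcast]
    exact lt_trans hih hstep

lemma adj_antitone {α : Type*} [Preorder α] (f : Fin n → α)
    (h : ∀ (t : Fin n) (ht : (t : ℕ) + 1 < n), f ⟨(t : ℕ) + 1, ht⟩ ≤ f t) :
    Antitone f := by
  intro a b hab
  obtain ⟨m, hm⟩ : ∃ m, (b : ℕ) = (a : ℕ) + m := ⟨(b : ℕ) - (a : ℕ), by omega⟩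
  clear hab
  induction m generalizing b with
  | zero =>
    have : a = b := Fin.ext (by omega)
    rw [this]
  | succ m ih =>
    have hb' : (a : ℕ) + m < n := by have := b.isLt; omega
    have hb'1 : (a : ℕ) + m + 1 < n := by have := b.isLt; omega
    have hb : b = ⟨(a : ℕ) + m + 1, hb'1⟩ := Fin.ext (by simp; omega)
    have h1 : f b ≤ f ⟨(a : ℕ) + m, hb'⟩ := by
      rw [hb]
      exact h ⟨(a : ℕ) + m, hb'⟩ hb'1
    have h2 : f (⟨(a : ℕ) + m, hb'⟩ : Fin n) ≤ f a := by
      apply ih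
      simp
    exact le_trans h1 h2


lemma eps_le_one (σ : Equiv.Perm ℤ) (i : ℕ) : epsB σ i ≤ 1 := by
  unfold epsB; split <;> omega

lemma cast_succ (t : Fin n) : (((t : ℕ) + 1 : ℕ) : ℤ) = ((t : ℕ) : ℤ) + 1 := by
  push_cast; ring

lemma epsB_eq (t : Fin n) : epsB σ ((t : ℕ) + 1)
    = if σ (((t : ℕ) : ℤ) + 1) < 0 then 1 else 0 := by
  unfold epsB
  simp only [cast_succ]

lemma fB_eq (i : ℕ) : fB n σ i = 2 * dB n σ i + epsB σ i := rfl

lemma pos_chain (hmem : σ ∈ HOct n) {a b : Fin n} (hab : (b : ℕ) < (a : ℕ))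
    (hf : fB n σ ((a : ℕ) + 1) = fB n σ ((b : ℕ) + 1)) :
    σ (((b : ℕ) : ℤ) + 1) < σ (((a : ℕ) : ℤ) + 1) := by
  have h1 : dB n σ ((a : ℕ) + 1) ≤ dB n σ ((b : ℕ) + 1) := dB_antitone (by omega)
  have e1 := eps_le_one σ ((a : ℕ) + 1)
  have e2 := eps_le_one σ ((b : ℕ) + 1)
  have hfa := fB_eq (σ := σ) (n := n) ((a : ℕ) + 1)
  have hfb := fB_eq (σ := σ) (n := n) ((b : ℕ) + 1)
  have hd : dB n σ ((b : ℕ) + 1) = dB n σ ((a : ℕ) + 1) := by omega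
  have harith : (b : ℕ) + 1 + ((a : ℕ) - (b : ℕ) - 1) + 1 = (a : ℕ) + 1 := by omega
  have hch := chain_of_dB_eq hmem ((a : ℕ) - (b : ℕ) - 1) ((b : ℕ) + 1) (by omega)
    (by have := a.isLt; omega) (by rw [harith, hd])
  rw [harith] at hch
  rw [cast_succ b, cast_succ a] at hch
  exact hch

lemma key_facts (hn : 1 ≤ n) (q : Fin n → ℕ) (hσ : IsSignedIndexPerm n q σ) :
    (∀ t : Fin n, fB n σ ((t : ℕ) + 1) ≤ q (sIdx σ t)) ∧
    (∀ t : Fin n, q (sIdx σ t) % 2 = fB n σ ((t : ℕ) + 1) % 2) ∧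
    Antitone (fun t : Fin n => fB n σ ((t : ℕ) + 1)) ∧
    Antitone (fun t : Fin n => ((q (sIdx σ t) : ℤ) - (fB n σ ((t : ℕ) + 1) : ℤ))) := by
  obtain ⟨hmem, hanti, htie, hpar⟩ := hσ
  have hne : ∀ t : Fin n, σ (((t : ℕ) : ℤ) + 1) ≠ 0 :=
    fun t => hoct_ne_zero hmem (by positivity)
  have hqmod : ∀ t : Fin n, q (sIdx σ t) % 2 = epsB σ ((t : ℕ) + 1) := by
    intro t
    have h1 := hpar t
    rw [Nat.even_iff] at h1
    rw [epsB_eq t]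
    by_cases hlt : σ (((t : ℕ) : ℤ) + 1) < 0
    · rw [if_pos hlt]
      have h2 : ¬ (q (sIdx σ t) % 2 = 0) := fun hc => by have := h1.1 hc; omega
      omega
    · rw [if_neg hlt]
      have h0 := hne t
      exact h1.2 (by omega)
  have hstep : ∀ (t : Fin n) (ht : (t : ℕ) + 1 < n),
      fB n σ ((t : ℕ) + 1 + 1) ≤ fB n σ ((t : ℕ) + 1) ∧
      (q (sIdx σ ⟨(t : ℕ) + 1, ht⟩) : ℤ) - (fB n σ ((t : ℕ) + 1 + 1) : ℤ)
        ≤ (q (sIdx σ t) : ℤ) - (fB n σ ((t : ℕ) + 1) : ℤ) := by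
    intro t ht
    set t' : Fin n := ⟨(t : ℕ) + 1, ht⟩ with ht'def
    have ht'n : (t' : ℕ) = (t : ℕ) + 1 := rfl
    have htt' : t < t' := by rw [Fin.lt_def, ht'n]; omega
    have hQle : q (sIdx σ t') ≤ q (sIdx σ t) := hanti (le_of_lt htt')
    have hdb := dB_step (σ := σ) (i := (t : ℕ) + 1) (by omega) ht
    rw [cast_succ t] at hdb
    have hm1 := hqmod t
    have hm2 := hqmod t'
    rw [ht'n] at hm2
    have e1 := epsB_eq (σ := σ) t
    have e2 := epsB_eq (σ := σ) t'
    rw [ht'n] at e2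
    have ht'c : (((t : ℕ) + 1 : ℕ) : ℤ) = ((t : ℕ) : ℤ) + 1 := cast_succ t
    rw [ht'c] at e2
    have hfa := fB_eq (σ := σ) (n := n) ((t : ℕ) + 1)
    have hfb := fB_eq (σ := σ) (n := n) ((t : ℕ) + 1 + 1)
    have hAne := hne t
    have hBne : σ (((t : ℕ) : ℤ) + 1 + 1) ≠ 0 := by
      have := hne t'
      rwa [ht'n, ht'c] at this
    have hABne : σ (((t : ℕ) : ℤ) + 1) ≠ σ (((t : ℕ) : ℤ) + 1 + 1) := by
      intro hc
      have := σ.injective hc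
      omega
    have hne01 : q (sIdx σ t') = q (sIdx σ t) → σ (((t : ℕ) : ℤ) + 1) < σ (((t : ℕ) : ℤ) + 1 + 1) := by
      intro heq
      have := htie t t' htt' heq.symm t t' le_rfl htt' le_rfl
      rwa [ht'n, ht'c] at this
    by_cases hd : σ (((t : ℕ) : ℤ) + 1 + 1) < σ (((t : ℕ) : ℤ) + 1)
    · rw [if_pos hd] at hdb
      have hq_ne : q (sIdx σ t') ≠ q (sIdx σ t) := fun heq => by
        have := hne01 heq; omega
      by_cases hA0 : σ (((t : ℕ) : ℤ) + 1) < 0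
      · have hB0 : σ (((t : ℕ) : ℤ) + 1 + 1) < 0 := by omega
        rw [if_pos hA0] at e1
        rw [if_pos hB0] at e2
        omega
      · rw [if_neg hA0] at e1
        by_cases hB0 : σ (((t : ℕ) : ℤ) + 1 + 1) < 0
        · rw [if_pos hB0] at e2
          omega
        · rw [if_neg hB0] at e2
          omega
    · rw [if_neg hd] at hdb
      by_cases hA0 : σ (((t : ℕ) : ℤ) + 1) < 0
      · rw [if_pos hA0] at e1
        by_cases hB0 : σ (((t : ℕ) : ℤ) + 1 + 1) < 0
        · rw [if_pos hB0] at e2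
          omega
        · rw [if_neg hB0] at e2
          omega
      · have hB0 : ¬ σ (((t : ℕ) : ℤ) + 1 + 1) < 0 := by omega
        rw [if_neg hA0] at e1
        rw [if_neg hB0] at e2
        omega
  have hFanti : Antitone (fun t : Fin n => fB n σ ((t : ℕ) + 1)) :=
    adj_antitone _ (fun t ht => (hstep t ht).1)
  have hGanti : Antitone
      (fun t : Fin n => ((q (sIdx σ t) : ℤ) - (fB n σ ((t : ℕ) + 1) : ℤ))) :=
    adj_antitone _ (fun t ht => (hstep t ht).2)
  have hfBmod : ∀ t : Fin n, q (sIdx σ t) % 2 = fB n σ ((t : ℕ) + 1) % 2 := by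
    intro t
    have h1 := hqmod t
    have h2 := fB_eq (σ := σ) (n := n) ((t : ℕ) + 1)
    have h3 := eps_le_one σ ((t : ℕ) + 1)
    omega
  set tlast : Fin n := ⟨n - 1, by omega⟩ with htlast
  have htn : (tlast : ℕ) + 1 = n := by
    simp only [htlast]
    omega
  have hlast : fB n σ ((tlast : ℕ) + 1) ≤ q (sIdx σ tlast) := by
    have h1 := hqmod tlast
    have h2 : dB n σ ((tlast : ℕ) + 1) = 0 := by rw [htn]; exact dB_top
    have h3 := eps_le_one σ ((tlast : ℕ) + 1)
    have h4 := fB_eq (σ := σ) (n := n) ((tlast : ℕ) + 1)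
    omega
  have hle : ∀ t : Fin n, fB n σ ((t : ℕ) + 1) ≤ q (sIdx σ t) := by
    intro t
    have h1 : ((q (sIdx σ tlast) : ℤ) - (fB n σ ((tlast : ℕ) + 1) : ℤ))
        ≤ ((q (sIdx σ t) : ℤ) - (fB n σ ((t : ℕ) + 1) : ℤ)) := by
      apply hGanti
      rw [Fin.le_def]
      have := t.isLt
      simp only [htlast]
      omega
    omega
  exact ⟨hle, hfBmod, hFanti, hGanti⟩

end QDecompAux

/-- Decomposition `q = 2μ + γ` of the `y`-exponents of an ordered monomial, where
`γ_i = f_{|σ⁻¹(i)|}(σ)` and `μ_i = (q_i - γ_i)/2` for the signed index permutation `σ`: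
(1) `q = 2μ + γ`; (2) `μ_{|σ(1)|} ≥ ⋯ ≥ μ_{|σ(n)|}`; (3) `γ_{|σ(1)|} ≥ ⋯ ≥ γ_{|σ(n)|}`;
(4) if `i < j` and `γ_i = γ_j` then `𝔰(q_i) ≥ 𝔰(q_j)`. -/
theorem q_decomposition (n : ℕ) (hn : 1 ≤ n) (p q : Fin n → ℕ)
    (hO : OrderedMon n p q) (σ : Equiv.Perm ℤ) (hσ : IsSignedIndexPerm n q σ)
    (γ μ : Fin n → ℕ)
    (hγ : ∀ i : Fin n, γ i = fB n σ ((σ⁻¹ ((i : ℕ) + 1 : ℤ)).natAbs))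
    (hμ : ∀ i : Fin n, μ i = (q i - γ i) / 2) :
    (∀ i : Fin n, q i = 2 * μ i + γ i) ∧
    Antitone (fun i : Fin n => μ (sIdx σ i)) ∧
    Antitone (fun i : Fin n => γ (sIdx σ i)) ∧
    (∀ i j : Fin n, i < j → γ i = γ j → sFun (q j) ≤ sFun (q i)) := by
  obtain ⟨hmem, hanti, htie, hpar⟩ := hσ
  have hσ' : IsSignedIndexPerm n q σ := ⟨hmem, hanti, htie, hpar⟩
  obtain ⟨hle, hmod, hFanti, hGanti⟩ := key_facts hn q hσ'
  have hinv : σ⁻¹ ∈ HOct n := (HOct n).inv_mem hmem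
  have hpos : ∀ i : Fin n, sIdx σ (sIdx σ⁻¹ i) = i := sIdx_sIdx_inv hmem
  have hγpos : ∀ i : Fin n, γ i = fB n σ ((sIdx σ⁻¹ i : ℕ) + 1) := by
    intro i
    rw [hγ i, ← sIdx_val_add_one hinv i]
  refine ⟨?_, ?_, ?_, ?_⟩
  · intro i
    have h1 := hle (sIdx σ⁻¹ i)
    have h2 := hmod (sIdx σ⁻¹ i)
    rw [hpos i] at h1 h2
    rw [hμ i, hγpos i]
    omega
  · intro s t hst
    simp only
    rw [hμ, hμ, hγpos, hγpos, sIdx_inv_sIdx hmem s, sIdx_inv_sIdx hmem t]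
    have h1 := hle s
    have h2 := hle t
    have h3 := hGanti hst
    simp only at h3
    omega
  · intro s t hst
    simp only
    rw [hγpos, hγpos, sIdx_inv_sIdx hmem s, sIdx_inv_sIdx hmem t]
    exact hFanti hst
  · intro i j hij hγij
    have hij' : (i : ℕ) < (j : ℕ) := Fin.lt_def.mp hij
    have hA := sIdx_val_add_one hmem (sIdx σ⁻¹ i)
    rw [hpos i] at hA
    have hB := sIdx_val_add_one hmem (sIdx σ⁻¹ j)
    rw [hpos j] at hB
    have hAne : σ (((sIdx σ⁻¹ i : ℕ) : ℤ) + 1) ≠ 0 := hoct_ne_zero hmem (by positivity)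
    have hBne : σ (((sIdx σ⁻¹ j : ℕ) : ℤ) + 1) ≠ 0 := hoct_ne_zero hmem (by positivity)
    have hEi : Even (q i) ↔ 0 < σ (((sIdx σ⁻¹ i : ℕ) : ℤ) + 1) := by
      have := hpar (sIdx σ⁻¹ i)
      rwa [hpos i] at this
    have hEj : Even (q j) ↔ 0 < σ (((sIdx σ⁻¹ j : ℕ) : ℤ) + 1) := by
      have := hpar (sIdx σ⁻¹ j)
      rwa [hpos j] at this
    have hfa : γ i = fB n σ ((sIdx σ⁻¹ i : ℕ) + 1) := hγpos i
    have hfb : γ j = fB n σ ((sIdx σ⁻¹ j : ℕ) + 1) := hγpos j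
    have heia := epsB_eq (σ := σ) (sIdx σ⁻¹ i)
    have heib := epsB_eq (σ := σ) (sIdx σ⁻¹ j)
    have hfBa := fB_eq (σ := σ) (n := n) ((sIdx σ⁻¹ i : ℕ) + 1)
    have hfBb := fB_eq (σ := σ) (n := n) ((sIdx σ⁻¹ j : ℕ) + 1)
    have hqi : q (sIdx σ (sIdx σ⁻¹ i)) = q i := by rw [hpos i]
    have hqj : q (sIdx σ (sIdx σ⁻¹ j)) = q j := by rw [hpos j]
    unfold sFun
    by_cases hA0 : 0 < σ (((sIdx σ⁻¹ i : ℕ) : ℤ) + 1)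
    · by_cases hB0 : 0 < σ (((sIdx σ⁻¹ j : ℕ) : ℤ) + 1)
      · rw [if_pos (hEi.2 hA0), if_pos (hEj.2 hB0)]
        have hji : q j ≤ q i := by
          by_contra hc
          push_neg at hc
          have hba : (sIdx σ⁻¹ j : ℕ) < (sIdx σ⁻¹ i : ℕ) := by
            by_contra hba
            push_neg at hba
            have h4 := hanti (show sIdx σ⁻¹ i ≤ sIdx σ⁻¹ j from Fin.le_def.mpr hba)
            simp only at h4
            rw [hqi, hqj] at h4
            omega
          have hch := pos_chain hmem hba (by rw [← hfa, ← hfb, hγij])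
          omega
        exact_mod_cast hji
      · rw [if_pos (hEi.2 hA0), if_neg (fun he => absurd (hEj.1 he) hB0)]
        omega
    · by_cases hB0 : 0 < σ (((sIdx σ⁻¹ j : ℕ) : ℤ) + 1)
      · exfalso
        rw [if_pos (by omega)] at heia
        rw [if_neg (by omega)] at heib
        omega
      · rw [if_neg (fun he => absurd (hEi.1 he) hA0),
          if_neg (fun he => absurd (hEj.1 he) hB0)]
        have hij2 : q i ≤ q j := by
          by_contra hc
          push_neg at hc
          have hab : (sIdx σ⁻¹ i : ℕ) < (sIdx σ⁻¹ j : ℕ) := by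
            by_contra hab
            push_neg at hab
            have h4 := hanti (show sIdx σ⁻¹ j ≤ sIdx σ⁻¹ i from Fin.le_def.mpr hab)
            simp only at h4
            rw [hqi, hqj] at h4
            omega
          have hch := pos_chain hmem hab (by rw [← hfb, ← hfa, hγij])
          omega
        omega
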